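/- Let P(t) be a real polynomial in n variables whose Newton diagram has corner points v₁,…,v_r with associated cones S(1),…,S(r) (where S(j) = nonnegative-rational-cone spanned by the normal vectors of the faces meeting at v_j, intersected with ℕⁿ). Then ∪_{j=1}^r S(j) = ℕⁿ, i.e., every lattice point q ∈ ℕⁿ lies in at least one cone S(j). -/

import Mathlib

open Pointwise

/-- Geometric-sum bound: `∑_{i<n} (B+1)^i * B < (B+1)^n`. -/
lemma stmt12_geom (B : ℕ) : ∀ n : ℕ, (∑ i ∈ Finset.range n, (B + 1) ^ i * B) < (B + 1) ^ n := by
  intro n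
  induction n with
  | zero => simp
  | succ n ih =>
      rw [Finset.sum_range_succ, pow_succ]
      nlinarith [ih]

/-- Base-`(B+1)` representations are injective on digit vectors with digits `≤ B`. -/
lemma stmt12_digits_inj (B : ℕ) : ∀ (n : ℕ) (d d' : Fin n → ℕ),
    (∀ i, d i ≤ B) → (∀ i, d' i ≤ B) →
    (∑ i, (B + 1) ^ i.val * d i) = (∑ i, (B + 1) ^ i.val * d' i) → d = d' := by
  intro n
  induction n with
  | zero => intro d d' _ _ _; funext i; exact i.elim0
  | succ n ih =>
      intro d d' hd hd' hsum
      rw [Fin.sum_univ_succ, Fin.sum_univ_succ] at hsum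
      simp only [Fin.val_zero, pow_zero, one_mul, Fin.val_succ] at hsum
      have key : ∀ e : Fin (n + 1) → ℕ,
          ∑ i : Fin n, (B + 1) ^ ((i : ℕ) + 1) * e i.succ
            = (B + 1) * ∑ i : Fin n, (B + 1) ^ (i : ℕ) * e i.succ := by
        intro e
        rw [Finset.mul_sum]
        refine Finset.sum_congr rfl fun i _ => ?_
        ring
      rw [key d, key d'] at hsum
      have h0 : d 0 = d' 0 := by
        have h1 : d 0 % (B + 1) = d' 0 % (B + 1) := by
          have := congrArg (· % (B + 1)) hsum
          simpa [Nat.add_mul_mod_self_left] using this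
        rwa [Nat.mod_eq_of_lt (by have := hd 0; omega),
          Nat.mod_eq_of_lt (by have := hd' 0; omega)] at h1
      have htail : (∑ i : Fin n, (B + 1) ^ (i : ℕ) * d i.succ)
          = ∑ i : Fin n, (B + 1) ^ (i : ℕ) * d' i.succ := by
        have hB : 0 < B + 1 := Nat.succ_pos B
        rw [h0] at hsum
        have h2 : (B + 1) * (∑ i : Fin n, (B + 1) ^ (i : ℕ) * d i.succ)
            = (B + 1) * ∑ i : Fin n, (B + 1) ^ (i : ℕ) * d' i.succ := by omega
        exact Nat.eq_of_mul_eq_mul_left hB h2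
      have htl := ih (fun i => d i.succ) (fun i => d' i.succ) (fun i => hd i.succ)
        (fun i => hd' i.succ) htail
      funext i
      refine Fin.cases h0 (fun j => ?_) i
      exact congrFun htl j

/-- Covering property `∪_j S(j) = ℕⁿ`: every `q ∈ ℕⁿ` lies in the (closed normal)
cone of some corner point `v_j` of the Newton diagram of `P`, i.e. there is a corner
point `v_j ∈ Λ` (an extreme point of `conv(Λ + ℝ₊ⁿ)`) with `q·(v − v_j) ≥ 0` for all
`v ∈ Λ`. -/
theorem stmt12 (n : ℕ) (Λ : Finset (Fin n → ℝ)) (hne : Λ.Nonempty)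
    (hΛnat : ∀ v ∈ Λ, ∀ i, ∃ m : ℕ, v i = m) :
    ∀ q : Fin n → ℕ, ∃ vj ∈ Λ,
      vj ∈ Set.extremePoints ℝ
        (convexHull ℝ ((↑Λ : Set (Fin n → ℝ)) + {x : Fin n → ℝ | ∀ i, 0 ≤ x i})) ∧
      ∀ v ∈ Λ, 0 ≤ ∑ i, (q i : ℝ) * (v i - vj i) := by
  intro q
  classical
  -- natural-number coordinates
  set N : (Fin n → ℝ) → Fin n → ℕ := fun v i => ⌊v i⌋₊ with hNdef
  have hN : ∀ v ∈ Λ, ∀ i, ((N v i : ℝ)) = v i := by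
    intro v hv i
    obtain ⟨m, hm⟩ := hΛnat v hv i
    simp [hNdef, hm]
  -- a uniform bound on the coordinates
  set B : ℕ := Λ.sup fun v => Finset.univ.sup (N v) with hBdef
  have hB : ∀ v ∈ Λ, ∀ i, N v i ≤ B := by
    intro v hv i
    exact le_trans (Finset.le_sup (Finset.mem_univ i))
      (Finset.le_sup (f := fun v => Finset.univ.sup (N v)) hv)
  set A : ℕ := (B + 1) ^ n with hAdef
  have hApos : 0 < A := pow_pos (Nat.succ_pos B) n
  set Q : (Fin n → ℝ) → ℕ := fun v => ∑ i, q i * N v i with hQdef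
  set L : (Fin n → ℝ) → ℕ := fun v => ∑ i, (B + 1) ^ i.val * N v i with hLdef
  have hLA : ∀ v ∈ Λ, L v < A := by
    intro v hv
    have h1 : L v ≤ ∑ i : Fin n, (B + 1) ^ i.val * B :=
      Finset.sum_le_sum fun i _ => Nat.mul_le_mul_left _ (hB v hv i)
    have h2 : (∑ i : Fin n, (B + 1) ^ i.val * B) = ∑ i ∈ Finset.range n, (B + 1) ^ i * B :=
      Fin.sum_univ_eq_sum_range (fun i => (B + 1) ^ i * B) n
    calc L v ≤ ∑ i ∈ Finset.range n, (B + 1) ^ i * B := by rw [← h2]; exact h1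
      _ < (B + 1) ^ n := stmt12_geom B n
  set F : (Fin n → ℝ) → ℕ := fun v => A * Q v + L v with hFdef
  obtain ⟨vj, hvjΛ, hmin⟩ := Finset.exists_min_image Λ F hne
  -- uniqueness on Λ of the F-value
  have huniq : ∀ v ∈ Λ, F v = F vj → v = vj := by
    intro v hv hFv
    have hLv := hLA v hv
    have hLj := hLA vj hvjΛ
    have hLeq : L v = L vj := by
      have h1 : (A * Q v + L v) % A = (A * Q vj + L vj) % A := congrArg (· % A) hFv
      rwa [Nat.mul_add_mod, Nat.mul_add_mod, Nat.mod_eq_of_lt hLv, Nat.mod_eq_of_lt hLj] at h1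
    have hNeq : N v = N vj :=
      stmt12_digits_inj B n (N v) (N vj) (hB v hv) (hB vj hvjΛ) hLeq
    funext i
    rw [← hN v hv i, ← hN vj hvjΛ i, hNeq]
  -- Q-minimality
  have hQmin : ∀ v ∈ Λ, Q vj ≤ Q v := by
    intro v hv
    have h1 : A * Q vj + L vj ≤ A * Q v + L v := hmin v hv
    have h2 := hLA v hv
    have h3 := hLA vj hvjΛ
    have h4 : A * Q vj < A * (Q v + 1) := by
      rw [Nat.mul_add, Nat.mul_one]; omega
    exact Nat.lt_succ_iff.mp (Nat.lt_of_mul_lt_mul_left h4)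
  -- the strictly positive linear functional
  set w : Fin n → ℝ := fun i => (A : ℝ) * q i + ((B + 1 : ℝ)) ^ i.val with hwdef
  have hwpos : ∀ i, 0 < w i := by
    intro i
    have h1 : (0 : ℝ) ≤ (A : ℝ) * q i := by positivity
    have h2 : (0 : ℝ) < (B + 1 : ℝ) ^ i.val := by positivity
    simp only [hwdef]; linarith
  set W : (Fin n → ℝ) → ℝ := fun x => ∑ i, w i * x i with hWdef
  have hWF : ∀ v ∈ Λ, W v = (F v : ℝ) := by
    intro v hv
    simp only [hWdef, hwdef, hFdef, hQdef, hLdef]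
    push_cast
    rw [Finset.mul_sum, ← Finset.sum_add_distrib]
    refine Finset.sum_congr rfl fun i _ => ?_
    rw [← hN v hv i]
    ring
  have hWmin : ∀ v ∈ Λ, W vj ≤ W v := by
    intro v hv
    rw [hWF v hv, hWF vj hvjΛ]
    exact_mod_cast hmin v hv
  have hWuniq : ∀ v ∈ Λ, W v = W vj → v = vj := by
    intro v hv h
    rw [hWF v hv, hWF vj hvjΛ] at h
    exact huniq v hv (by exact_mod_cast h)
  -- linearity of W
  have hWlin : ∀ (a b : ℝ) (y z : Fin n → ℝ),
      W (a • y + b • z) = a * W y + b * W z := by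
    intro a b y z
    simp only [hWdef, Finset.mul_sum, ← Finset.sum_add_distrib]
    refine Finset.sum_congr rfl fun i _ => ?_
    simp only [Pi.add_apply, Pi.smul_apply, smul_eq_mul]
    ring
  set S : Set (Fin n → ℝ) := (↑Λ : Set (Fin n → ℝ)) + {x : Fin n → ℝ | ∀ i, 0 ≤ x i} with hSdef
  -- the tie-set
  set T : Set (Fin n → ℝ) := {x | W vj < W x} ∪ {vj} with hTdef
  have hTconv : Convex ℝ T := by
    intro y hy z hz a b ha hb hab
    have hcomb : W (a • y + b • z) = a * W y + b * W z := hWlin a b y z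
    rcases hy with hy | hy <;> rcases hz with hz | hz
    · -- both strict
      simp only [Set.mem_setOf_eq] at hy hz
      refine Set.mem_union_left _ ?_
      simp only [Set.mem_setOf_eq]
      rw [hcomb]
      rcases eq_or_lt_of_le ha with ha0 | ha0
      · have hb1 : b = 1 := by linarith
        rw [← ha0, hb1]; linarith
      · have e3 : a * (W y - W vj) + b * (W z - W vj) = a * W y + b * W z - W vj := by
          linear_combination - W vj * hab
        linarith [mul_pos ha0 (sub_pos.2 hy), mul_nonneg hb (sub_pos.2 hz).le, e3]
    · -- z = vj
      simp only [Set.mem_singleton_iff] at hz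
      simp only [Set.mem_setOf_eq] at hy
      rw [hz]
      rcases eq_or_lt_of_le ha with ha0 | ha0
      · refine Set.mem_union_right _ ?_
        have hb1 : b = 1 := by linarith
        simp [← ha0, hb1]
      · refine Set.mem_union_left _ ?_
        simp only [Set.mem_setOf_eq]
        rw [hWlin]
        have e3 : a * (W y - W vj) = a * W y + b * W vj - W vj := by
          linear_combination - W vj * hab
        linarith [mul_pos ha0 (sub_pos.2 hy), e3]
    · -- y = vj
      simp only [Set.mem_singleton_iff] at hy
      simp only [Set.mem_setOf_eq] at hz
      rw [hy]
      rcases eq_or_lt_of_le hb with hb0 | hb0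
      · refine Set.mem_union_right _ ?_
        have ha1 : a = 1 := by linarith
        simp [← hb0, ha1]
      · refine Set.mem_union_left _ ?_
        simp only [Set.mem_setOf_eq]
        rw [hWlin]
        have e3 : b * (W z - W vj) = a * W vj + b * W z - W vj := by
          linear_combination - W vj * hab
        linarith [mul_pos hb0 (sub_pos.2 hz), e3]
    · -- both vj
      simp only [Set.mem_singleton_iff] at hy hz
      rw [hy, hz, ← add_smul, hab, one_smul]
      exact Set.mem_union_right _ rfl
  have hST : S ⊆ T := by
    intro x hx
    rw [hSdef, Set.mem_add] at hx
    obtain ⟨v, hv, r, hr, rfl⟩ := hx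
    have hvΛ : v ∈ Λ := hv
    simp only [Set.mem_setOf_eq] at hr
    have hWr : 0 ≤ W r := by
      apply Finset.sum_nonneg
      intro i _
      exact mul_nonneg (hwpos i).le (hr i)
    have hWvr : W (v + r) = W v + W r := by
      simp only [hWdef, ← Finset.sum_add_distrib]
      refine Finset.sum_congr rfl fun i _ => ?_
      simp [mul_add]
    by_cases hveq : v = vj
    · subst hveq
      by_cases hreq : r = 0
      · refine Set.mem_union_right _ ?_
        simp [hreq]
      · refine Set.mem_union_left _ ?_
        have hex : ∃ i, 0 < r i := by
          by_contra hc
          push_neg at hc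
          exact hreq (funext fun i => le_antisymm (hc i) (hr i))
        obtain ⟨i, hi⟩ := hex
        have hWrpos : 0 < W r := by
          have h1 : 0 < w i * r i := mul_pos (hwpos i) hi
          have hle : w i * r i ≤ W r :=
            Finset.single_le_sum (f := fun i => w i * r i)
              (fun j _ => mul_nonneg (hwpos j).le (hr j)) (Finset.mem_univ i)
          linarith
        simp only [Set.mem_setOf_eq]
        rw [hWvr]
        linarith
    · refine Set.mem_union_left _ ?_
      have hlt : W vj < W v := by
        rcases lt_or_eq_of_le (hWmin v hvΛ) with h | h
        · exact h
        · exact absurd (hWuniq v hvΛ h.symm) hveq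
      simp only [Set.mem_setOf_eq]
      rw [hWvr]
      linarith
  have hCT : convexHull ℝ S ⊆ T := convexHull_min hST hTconv
  have hCmin : ∀ x ∈ convexHull ℝ S, W vj ≤ W x := by
    intro x hx
    rcases hCT hx with h | h
    · exact h.le
    · simp only [Set.mem_singleton_iff] at h; rw [h]
  have hCuniq : ∀ x ∈ convexHull ℝ S, W x = W vj → x = vj := by
    intro x hx h
    rcases hCT hx with h' | h'
    · exact absurd h (ne_of_gt h')
    · exact h'
  have hvjS : vj ∈ S := by
    rw [hSdef, Set.mem_add]
    exact ⟨vj, hvjΛ, 0, fun i => le_refl 0, add_zero vj⟩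
  have hvjC : vj ∈ convexHull ℝ S := subset_convexHull ℝ S hvjS
  refine ⟨vj, hvjΛ, ?_, ?_⟩
  · -- extreme point
    refine ⟨hvjC, fun x₁ hx₁ x₂ hx₂ hseg => ?_⟩
    obtain ⟨a, b, ha, hb, hab, hx⟩ := hseg
    have h1 : W vj = a * W x₁ + b * W x₂ := by
      rw [← hx, hWlin]
    have h2 := hCmin x₁ hx₁
    have h3 := hCmin x₂ hx₂
    have e3 : a * (W x₁ - W vj) + b * (W x₂ - W vj) = 0 := by
      linear_combination -h1 - W vj * hab
    have e1 : 0 ≤ a * (W x₁ - W vj) := mul_nonneg ha.le (by linarith)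
    have e2 : 0 ≤ b * (W x₂ - W vj) := mul_nonneg hb.le (by linarith)
    have h4 : a * (W x₁ - W vj) = 0 := by linarith
    have h5 : b * (W x₂ - W vj) = 0 := by linarith
    have hW1 : W x₁ = W vj := by
      rcases mul_eq_zero.mp h4 with h | h
      · exact absurd h (ne_of_gt ha)
      · linarith
    have hW2 : W x₂ = W vj := by
      rcases mul_eq_zero.mp h5 with h | h
      · exact absurd h (ne_of_gt hb)
      · linarith
    exact hCuniq x₁ hx₁ hW1
  · -- the inequality
    intro v hv
    have hQle := hQmin v hv
    have hcast : ∑ i, (q i : ℝ) * (v i - vj i) = (Q v : ℝ) - (Q vj : ℝ) := by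
      simp only [hQdef]
      push_cast
      rw [← Finset.sum_sub_distrib]
      refine Finset.sum_congr rfl fun i _ => ?_
      rw [← hN v hv i, ← hN vj hvjΛ i]
      ring
    rw [hcast]
    have h5 : (Q vj : ℝ) ≤ (Q v : ℝ) := by exact_mod_cast hQle
    linarith
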